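/- The set of stationary ergodic Borel probability measures on Ω is a Gδ subset of the space of all Borel probability measures on Ω equipped with the topology of weak convergence, i.e. it is a countable intersection of open sets. -/

import Mathlib

set_option linter.unusedSectionVars false

open MeasureTheory Filter Set
open scoped ENNReal NNReal Topology

/-- The left shift on Cantor space. -/
def shiftMap : (ℕ → Bool) → (ℕ → Bool) := fun ω i => ω (i + 1)

lemma shiftMap_continuous : Continuous shiftMap :=
  continuous_pi fun i => continuous_apply (i + 1)

lemma shiftMap_measurable : Measurable shiftMap := shiftMap_continuous.measurable

def CylIdx : Type := Σ n : ℕ, Set (Fin n → Bool)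

instance : Countable CylIdx := by unfold CylIdx; infer_instance

def cylSet (c : CylIdx) : Set (ℕ → Bool) := {ω | (fun i : Fin c.1 => ω i.1) ∈ c.2}

lemma isClopen_cylSet (c : CylIdx) : IsClopen (cylSet c) := by
  have hc : Continuous fun (ω : ℕ → Bool) (i : Fin c.1) => ω i.1 :=
    continuous_pi fun i => continuous_apply i.1
  exact (isClopen_discrete c.2).preimage hc

lemma measurableSet_cylSet (c : CylIdx) : MeasurableSet (cylSet c) := by
  have hm : Measurable fun (ω : ℕ → Bool) (i : Fin c.1) => ω i.1 :=
    measurable_pi_lambda _ fun i => measurable_pi_apply i.1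
  exact hm ((Set.toFinite c.2).measurableSet)

lemma cylSet_mem_measurableCylinders (c : CylIdx) :
    cylSet c ∈ measurableCylinders (fun _ : ℕ => Bool) := by
  rw [mem_measurableCylinders]
  refine ⟨Finset.range c.1,
    {f | (fun i : Fin c.1 => f ⟨i.1, Finset.mem_range.2 i.2⟩) ∈ c.2},
    (Set.toFinite _).measurableSet, ?_⟩
  ext ω
  simp only [cylSet, mem_setOf_eq, mem_cylinder, Finset.restrict]

lemma exists_cylIdx {t : Set (ℕ → Bool)} (ht : t ∈ measurableCylinders (fun _ : ℕ => Bool)) :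
    ∃ c : CylIdx, t = cylSet c := by
  rw [mem_measurableCylinders] at ht
  obtain ⟨s, S, -, rfl⟩ := ht
  classical
  have hmem : ∀ i ∈ s, i < (if h : s.Nonempty then s.max' h + 1 else 0) := by
    intro i hi
    rw [dif_pos ⟨i, hi⟩]
    exact Nat.lt_succ_of_le (s.le_max' i hi)
  refine ⟨⟨(if h : s.Nonempty then s.max' h + 1 else 0),
    {f | (fun i : s => f ⟨i.1, hmem i.1 i.2⟩) ∈ S}⟩, ?_⟩
  ext ω
  simp only [cylSet, mem_setOf_eq, mem_cylinder, Finset.restrict]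
  rfl

lemma measure_ext_cyl {μ ν : Measure (ℕ → Bool)} [IsFiniteMeasure μ] [IsFiniteMeasure ν]
    (h : ∀ c : CylIdx, μ (cylSet c) = ν (cylSet c)) (huniv : μ univ = ν univ) : μ = ν := by
  refine ext_of_generate_finite _ generateFrom_measurableCylinders.symm
    isPiSystem_measurableCylinders (fun s hs => ?_) huniv
  obtain ⟨c, rfl⟩ := exists_cylIdx hs
  exact h c

/-- A measure on Cantor space is stationary if it is shift-invariant. -/
def StationaryMeasure (P : Measure (ℕ → Bool)) : Prop :=
  ∀ A : Set (ℕ → Bool), MeasurableSet A → P (shiftMap ⁻¹' A) = P A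

/-- A stationary measure is ergodic if every strictly shift-invariant Borel set
has measure `0` or `1`. -/
def ErgodicStationaryMeasure (P : Measure (ℕ → Bool)) : Prop :=
  StationaryMeasure P ∧
  ∀ A : Set (ℕ → Bool), MeasurableSet A → shiftMap ⁻¹' A = A → P A = 0 ∨ P A = 1

lemma stationary_iff_measurePreserving {P : Measure (ℕ → Bool)} :
    StationaryMeasure P ↔ MeasurePreserving shiftMap P P := by
  constructor
  · intro h
    refine ⟨shiftMap_measurable, Measure.ext fun s hs => ?_⟩
    rw [Measure.map_apply shiftMap_measurable hs]
    exact h s hs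
  · intro h A hA
    exact h.measure_preimage hA.nullMeasurableSet

lemma stationary_of_cyl {P : Measure (ℕ → Bool)} [IsProbabilityMeasure P]
    (h : ∀ c : CylIdx, P (shiftMap ⁻¹' cylSet c) = P (cylSet c)) : StationaryMeasure P := by
  have hmap : Measure.map shiftMap P = P := by
    have : IsProbabilityMeasure (P.map shiftMap) :=
      Measure.isProbabilityMeasure_map shiftMap_measurable.aemeasurable
    refine measure_ext_cyl (fun c => ?_) (by simp)
    rw [Measure.map_apply shiftMap_measurable (measurableSet_cylSet c)]
    exact h c
  intro A hA
  rw [← Measure.map_apply shiftMap_measurable hA, hmap]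

section L2

variable (P : Measure (ℕ → Bool)) [IsProbabilityMeasure P]

/-- indicator of a measurable set as element of L². -/
noncomputable def chi (A : Set (ℕ → Bool)) (hA : MeasurableSet A) : Lp ℝ 2 P :=
  indicatorConstLp 2 hA (measure_ne_top P A) (1 : ℝ)

lemma chi_congr {A B : Set (ℕ → Bool)} (h : A = B) (hA : MeasurableSet A)
    (hB : MeasurableSet B) : chi P A hA = chi P B hB := by
  subst h; rfl

lemma inner_chi_chi {A B : Set (ℕ → Bool)} (hA : MeasurableSet A) (hB : MeasurableSet B) :
    (inner ℝ (chi P A hA) (chi P B hB) : ℝ) = (P (A ∩ B)).toReal := by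
  rw [chi, chi, L2.inner_indicatorConstLp_one,
    setIntegral_indicatorConstLp hA hB (measure_ne_top P B) (1:ℝ), smul_eq_mul, mul_one,
    inter_comm, measureReal_def]

variable (hP : MeasurePreserving shiftMap P P)

noncomputable def koop : Lp ℝ 2 P →L[ℝ] Lp ℝ 2 P :=
  (Lp.compMeasurePreservingₗᵢ ℝ shiftMap hP).toContinuousLinearMap

lemma koop_norm_le : ‖koop P hP‖ ≤ 1 := LinearIsometry.norm_toContinuousLinearMap_le _

lemma koop_chi {A : Set (ℕ → Bool)} (hA : MeasurableSet A) :
    koop P hP (chi P A hA) =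
      chi P (shiftMap ⁻¹' A) (hA.preimage shiftMap_measurable) := by
  have : koop P hP (chi P A hA) = Lp.compMeasurePreserving shiftMap hP (chi P A hA) := rfl
  rw [this, chi, chi, Lp.indicatorConstLp_compMeasurePreserving]

lemma koop_chi' {A B : Set (ℕ → Bool)} (hA : MeasurableSet A) (hB : MeasurableSet B)
    (h : shiftMap ⁻¹' A = B) : koop P hP (chi P A hA) = chi P B hB := by
  rw [koop_chi]; exact chi_congr P h _ _

lemma koop_iter_chi (n : ℕ) {A : Set (ℕ → Bool)} (hA : MeasurableSet A) :
    (⇑(koop P hP))^[n] (chi P A hA) =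
      chi P ((shiftMap^[n]) ⁻¹' A) (hA.preimage (shiftMap_measurable.iterate n)) := by
  induction n with
  | zero => exact chi_congr P (by simp) hA _
  | succ n ih =>
      rw [Function.iterate_succ_apply', ih, koop_chi]
      exact chi_congr P (by rw [Function.iterate_succ, Set.preimage_comp]) _ _

/-- The fixed subspace of the Koopman operator. -/
@[reducible] noncomputable def fixS : Submodule ℝ (Lp ℝ 2 P) :=
  (koop P hP).eqLocus (1 : Lp ℝ 2 P →L[ℝ] Lp ℝ 2 P)

set_option synthInstance.maxHeartbeats 1000000 in
instance : CompleteSpace (fixS P hP) := by infer_instance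

lemma tendsto_birkhoff_proj (x : Lp ℝ 2 P) :
    Tendsto (birkhoffAverage ℝ (koop P hP) _root_.id · x) atTop
      (𝓝 ((Submodule.orthogonalProjectionOnto (fixS P hP) x : fixS P hP) : Lp ℝ 2 P)) :=
  (koop P hP).tendsto_birkhoffAverage_orthogonalProjection (koop_norm_le P hP) x

/-- The constant function 1 in L². -/
noncomputable def oneL : Lp ℝ 2 P := chi P univ MeasurableSet.univ

lemma inner_chi_one {A : Set (ℕ → Bool)} (hA : MeasurableSet A) :
    (inner ℝ (chi P A hA) (oneL P) : ℝ) = (P A).toReal := by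
  rw [oneL, inner_chi_chi]; simp

lemma inner_one_one : (inner ℝ (oneL P) (oneL P) : ℝ) = 1 := by
  rw [oneL, inner_chi_chi]; simp

lemma one_mem_fixS : oneL P ∈ fixS P hP := by
  rw [LinearMap.mem_eqLocus]
  show koop P hP (oneL P) = (1 : Lp ℝ 2 P →ₗ[ℝ] Lp ℝ 2 P) (oneL P)
  rw [Module.End.one_apply, oneL]
  exact koop_chi' P hP _ _ Set.preimage_univ

lemma chi_mem_fixS {B : Set (ℕ → Bool)} (hB : MeasurableSet B) (hfix : shiftMap ⁻¹' B = B) :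
    chi P B hB ∈ fixS P hP := by
  rw [LinearMap.mem_eqLocus]
  show koop P hP (chi P B hB) = (1 : Lp ℝ 2 P →ₗ[ℝ] Lp ℝ 2 P) (chi P B hB)
  rw [Module.End.one_apply]
  exact koop_chi' P hP _ _ hfix

lemma proj_fix_inner (x : Lp ℝ 2 P) {y : Lp ℝ 2 P} (hy : y ∈ fixS P hP) :
    (inner ℝ ((Submodule.orthogonalProjectionOnto (fixS P hP) x : fixS P hP) : Lp ℝ 2 P) y : ℝ)
      = inner ℝ x y := by
  have h : (inner ℝ (x - ((Submodule.orthogonalProjectionOnto (fixS P hP) x : fixS P hP) : Lp ℝ 2 P)) y : ℝ) = 0 :=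
    Submodule.starProjection_inner_eq_zero x y hy
  rw [inner_sub_left] at h
  linarith

lemma koop_proj (x : Lp ℝ 2 P) :
    koop P hP ((Submodule.orthogonalProjectionOnto (fixS P hP) x : fixS P hP) : Lp ℝ 2 P)
      = ((Submodule.orthogonalProjectionOnto (fixS P hP) x : fixS P hP) : Lp ℝ 2 P) := by
  have h := (Submodule.orthogonalProjectionOnto (fixS P hP) x).2
  rw [LinearMap.mem_eqLocus] at h
  simpa using h

lemma inner_birkhoff {A : Set (ℕ → Bool)} (hA : MeasurableSet A) (N : ℕ) :
    (inner ℝ (birkhoffAverage ℝ (⇑(koop P hP)) _root_.id N (chi P A hA)) (chi P A hA) : ℝ)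
      = (N : ℝ)⁻¹ * ∑ n ∈ Finset.range N, (P ((shiftMap^[n] ⁻¹' A) ∩ A)).toReal := by
  rw [birkhoffAverage, real_inner_smul_left, birkhoffSum, sum_inner]
  congr 1
  refine Finset.sum_congr rfl fun n _ => ?_
  rw [id_eq, koop_iter_chi P hP n hA, inner_chi_chi]

lemma tendsto_avg {A : Set (ℕ → Bool)} (hA : MeasurableSet A) :
    Tendsto (fun N : ℕ => (N : ℝ)⁻¹ *
        ∑ n ∈ Finset.range N, (P ((shiftMap^[n] ⁻¹' A) ∩ A)).toReal) atTop
      (𝓝 (‖((Submodule.orthogonalProjectionOnto (fixS P hP) (chi P A hA) : fixS P hP) : Lp ℝ 2 P)‖ ^ 2)) := by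
  have h := Filter.Tendsto.inner (𝕜 := ℝ) (tendsto_birkhoff_proj P hP (chi P A hA))
    (tendsto_const_nhds (x := chi P A hA) (f := atTop))
  have heq : (inner ℝ (((Submodule.orthogonalProjectionOnto (fixS P hP) (chi P A hA)) : fixS P hP) : Lp ℝ 2 P)
      (chi P A hA) : ℝ)
      = ‖((Submodule.orthogonalProjectionOnto (fixS P hP) (chi P A hA) : fixS P hP) : Lp ℝ 2 P)‖ ^ 2 := by
    rw [real_inner_comm, ← proj_fix_inner P hP (chi P A hA) (Submodule.orthogonalProjectionOnto (fixS P hP)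
      (chi P A hA)).2, real_inner_self_eq_norm_sq]
  rw [heq] at h
  refine h.congr fun N => ?_
  exact inner_birkhoff P hP hA N

lemma proj_inner_one {A : Set (ℕ → Bool)} (hA : MeasurableSet A) :
    (inner ℝ ((Submodule.orthogonalProjectionOnto (fixS P hP) (chi P A hA) : fixS P hP) : Lp ℝ 2 P)
      (oneL P) : ℝ) = (P A).toReal := by
  rw [proj_fix_inner P hP _ (one_mem_fixS P hP), inner_chi_one]

lemma proj_eq_const_iff {A : Set (ℕ → Bool)} (hA : MeasurableSet A) :
    ((Submodule.orthogonalProjectionOnto (fixS P hP) (chi P A hA) : fixS P hP) : Lp ℝ 2 P)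
        = (P A).toReal • oneL P
      ↔ ‖((Submodule.orthogonalProjectionOnto (fixS P hP) (chi P A hA) : fixS P hP) : Lp ℝ 2 P)‖ ^ 2
        = (P A).toReal ^ 2 := by
  set g : Lp ℝ 2 P := ((Submodule.orthogonalProjectionOnto (fixS P hP) (chi P A hA) : fixS P hP) : Lp ℝ 2 P)
    with hgdef
  set c : ℝ := (P A).toReal with hcdef
  have hgone : (inner ℝ g (oneL P) : ℝ) = c := proj_inner_one P hP hA
  constructor
  · intro h
    rw [h, ← real_inner_self_eq_norm_sq, real_inner_smul_left, real_inner_smul_right,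
      inner_one_one]
    ring
  · intro h
    have e1 : (inner ℝ g g : ℝ) = c ^ 2 := by rw [real_inner_self_eq_norm_sq, h]
    have e2 : (inner ℝ (oneL P) g : ℝ) = c := by rw [real_inner_comm]; exact hgone
    have hz : ‖g - c • oneL P‖ ^ 2 = 0 := by
      rw [← real_inner_self_eq_norm_sq, inner_sub_left, inner_sub_right, inner_sub_right,
        real_inner_smul_left, real_inner_smul_right, real_inner_smul_left,
        real_inner_smul_right, inner_one_one, e1, e2, hgone]
      ring
    have := pow_eq_zero_iff (n := 2) (by norm_num) |>.mp hz
    rw [norm_eq_zero, sub_eq_zero] at this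
    exact this

lemma norm_proj_of_preErgodic (hpe : PreErgodic shiftMap P) {A : Set (ℕ → Bool)}
    (hA : MeasurableSet A) :
    ‖((Submodule.orthogonalProjectionOnto (fixS P hP) (chi P A hA) : fixS P hP) : Lp ℝ 2 P)‖ ^ 2
      = (P A).toReal ^ 2 := by
  set g : Lp ℝ 2 P := ((Submodule.orthogonalProjectionOnto (fixS P hP) (chi P A hA) : fixS P hP) : Lp ℝ 2 P)
    with hgdef
  have hfix : koop P hP g = g := koop_proj P hP _
  have hcomp : ⇑g ∘ shiftMap =ᵐ[P] ⇑g := by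
    have h1 : ⇑(koop P hP g) =ᵐ[P] ⇑g ∘ shiftMap := Lp.coeFn_compMeasurePreserving g hP
    rw [hfix] at h1
    exact h1.symm
  obtain ⟨c, hc⟩ := (Ergodic.mk hP hpe).ae_eq_const_of_ae_eq_comp_ae
    (Lp.aestronglyMeasurable g) hcomp
  have hint : (inner ℝ g (oneL P) : ℝ) = c := by
    rw [real_inner_comm, oneL, chi, L2.inner_indicatorConstLp_one,
      Measure.restrict_univ, integral_congr_ae hc]
    simp
  have hgc : (P A).toReal = c := by rw [← proj_inner_one P hP hA, ← hgdef, hint]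
  have hnormsq : ‖g‖ ^ 2 = c ^ 2 := by
    rw [← real_inner_self_eq_norm_sq, L2.inner_def]
    have : ∫ x, (inner ℝ (g x) (g x) : ℝ) ∂P = ∫ (_ : ℕ → Bool), c * c ∂P := by
      refine integral_congr_ae ?_
      filter_upwards [hc] with x hx
      rw [hx]
      simp [RCLike.inner_apply, Function.const]
      ring
    rw [this]
    simp [sq]
  rw [hnormsq, hgc]

lemma preErgodic_of_proj
    (hproj : ∀ c : CylIdx,
      ((Submodule.orthogonalProjectionOnto (fixS P hP) (chi P (cylSet c) (measurableSet_cylSet c)) :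
          fixS P hP) : Lp ℝ 2 P)
        = (P (cylSet c)).toReal • oneL P)
    {B : Set (ℕ → Bool)} (hB : MeasurableSet B) (hfix : shiftMap ⁻¹' B = B) :
    P B = 0 ∨ P B = 1 := by
  have hBF : chi P B hB ∈ fixS P hP := chi_mem_fixS P hP hB hfix
  have key : ∀ c : CylIdx, P (cylSet c ∩ B) = P (cylSet c) * P B := by
    intro c
    have h1 : (P (cylSet c ∩ B)).toReal = (P (cylSet c)).toReal * (P B).toReal := by
      rw [← inner_chi_chi P (measurableSet_cylSet c) hB,
        ← proj_fix_inner P hP (chi P (cylSet c) (measurableSet_cylSet c)) hBF, hproj c,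
        real_inner_smul_left, oneL, inner_chi_chi]
      simp
    have h2 : P (cylSet c ∩ B) ≠ ⊤ := measure_ne_top P _
    have h3 : P (cylSet c) * P B ≠ ⊤ :=
      ENNReal.mul_ne_top (measure_ne_top P _) (measure_ne_top P _)
    rw [← ENNReal.toReal_eq_toReal_iff' h2 h3, ENNReal.toReal_mul]
    exact h1
  have hres : P.restrict B = (P B) • P := by
    haveI : IsFiniteMeasure ((P B) • P) := by
      constructor
      rw [Measure.smul_apply, smul_eq_mul, measure_univ, mul_one]
      exact (measure_lt_top P B)
    refine measure_ext_cyl (fun c => ?_) ?_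
    · rw [Measure.restrict_apply (measurableSet_cylSet c), Measure.smul_apply, smul_eq_mul,
        key c, mul_comm]
    · rw [Measure.restrict_apply MeasurableSet.univ, Set.univ_inter, Measure.smul_apply,
        smul_eq_mul, measure_univ, mul_one]
  have hBB : P B = P B * P B := by
    have h1 : P.restrict B B = P B := by
      rw [Measure.restrict_apply hB, Set.inter_self]
    rw [hres, Measure.smul_apply, smul_eq_mul] at h1
    exact h1.symm
  rcases eq_or_ne (P B) 0 with h | h
  · exact Or.inl h
  · refine Or.inr ?_
    have hr : (P B).toReal = (P B).toReal * (P B).toReal := by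
      conv_lhs => rw [hBB]
      rw [ENNReal.toReal_mul]
    have hr0 : (P B).toReal ≠ 0 := by
      rw [ENNReal.toReal_ne_zero]
      exact ⟨h, measure_ne_top P B⟩
    have hr1 : (P B).toReal = 1 := by
      have h4 : (P B).toReal * 1 = (P B).toReal * (P B).toReal := by
        rw [mul_one]; exact hr
      exact (mul_left_cancel₀ hr0 h4).symm
    rw [← ENNReal.toReal_eq_one_iff]
    exact hr1

end L2

lemma preErgodic_of_zero_one {P : Measure (ℕ → Bool)} [IsProbabilityMeasure P]
    (h2 : ∀ A : Set (ℕ → Bool), MeasurableSet A → shiftMap ⁻¹' A = A → P A = 0 ∨ P A = 1) :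
    PreErgodic shiftMap P := by
  constructor
  intro s hs hfix
  rw [Filter.eventuallyConst_set']
  rcases h2 s hs hfix with h | h
  · left; rwa [ae_eq_empty]
  · right
    rw [ae_eq_univ]
    rwa [prob_compl_eq_zero_iff hs]

lemma eq_limit_of_cluster {s : ℕ → ℝ} {L c : ℝ} (hs : Tendsto s atTop (𝓝 L))
    (h : ∀ k : ℕ, ∃ N, k ≤ N ∧ |s N - c| < 1 / (k + 1)) : L = c := by
  refine eq_of_forall_dist_le fun ε hε => ?_
  rw [Metric.tendsto_atTop] at hs
  obtain ⟨K, hK⟩ := hs (ε / 2) (by linarith)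
  obtain ⟨k, hk⟩ := exists_nat_one_div_lt (half_pos hε)
  obtain ⟨N, hN1, hN2⟩ := h (max k K)
  have h3 : dist (s N) L < ε / 2 := hK N (le_trans (le_max_right _ _) hN1)
  have h4 : (1 : ℝ) / (max k K + 1) ≤ 1 / (k + 1) := by
    apply one_div_le_one_div_of_le
    · positivity
    · have : (k : ℝ) ≤ (max k K : ℕ) := Nat.cast_le.mpr (le_max_left _ _)
      linarith
  have h5 : |s N - c| < ε / 2 := lt_of_lt_of_le hN2 (le_trans h4 hk.le)
  have h6 : dist (s N) L ≥ 0 := dist_nonneg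
  calc dist L c ≤ dist L (s N) + dist (s N) c := dist_triangle _ _ _
    _ = dist (s N) L + |s N - c| := by rw [dist_comm, Real.dist_eq (s N) c]
    _ ≤ ε := by linarith

lemma ergodicStationary_iff_forall (P : Measure (ℕ → Bool)) [IsProbabilityMeasure P]
    (hP : MeasurePreserving shiftMap P P) :
    (∀ A : Set (ℕ → Bool), MeasurableSet A → shiftMap ⁻¹' A = A → P A = 0 ∨ P A = 1)
      ↔ ∀ c : CylIdx, ∀ k : ℕ, ∃ N, k ≤ N ∧
          |(N : ℝ)⁻¹ * ∑ n ∈ Finset.range N,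
              (P ((shiftMap^[n] ⁻¹' cylSet c) ∩ cylSet c)).toReal
            - (P (cylSet c)).toReal ^ 2| < 1 / (k + 1) := by
  constructor
  · intro h2 c k
    have hpe := preErgodic_of_zero_one h2
    have hlim := tendsto_avg P hP (measurableSet_cylSet c)
    rw [norm_proj_of_preErgodic P hP hpe] at hlim
    rw [Metric.tendsto_atTop] at hlim
    obtain ⟨K, hK⟩ := hlim (1 / (k + 1)) (by positivity)
    refine ⟨max k K, le_max_left _ _, ?_⟩
    have := hK (max k K) (le_max_right _ _)
    rwa [Real.dist_eq] at this
  · intro h B hB hfix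
    refine preErgodic_of_proj P hP (fun c => ?_) hB hfix
    rw [proj_eq_const_iff P hP]
    exact eq_limit_of_cluster (tendsto_avg P hP (measurableSet_cylSet c)) (h c)

noncomputable def mval (μ : ProbabilityMeasure (ℕ → Bool)) (C : Set (ℕ → Bool)) : ℝ :=
  ((μ : Measure (ℕ → Bool)) C).toReal

lemma continuous_mval {C : Set (ℕ → Bool)} (hC : IsClopen C) :
    Continuous fun μ : ProbabilityMeasure (ℕ → Bool) => mval μ C := by
  set f : BoundedContinuousFunction (ℕ → Bool) ℝ≥0 := (BoundedContinuousFunction.indicator C hC).nnrealPart with hf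
  have key : ∀ μ : ProbabilityMeasure (ℕ → Bool),
      ((μ.toFiniteMeasure.testAgainstNN f : ℝ≥0) : ℝ) = mval μ C := by
    intro μ
    have h0 : (μ.toFiniteMeasure.testAgainstNN f : ℝ≥0∞) = ∫⁻ x, (f x : ℝ≥0∞) ∂(μ : Measure _) :=
      FiniteMeasure.testAgainstNN_coe_eq
    have h1 : (fun x => ((f x : ℝ≥0) : ℝ≥0∞)) = C.indicator (fun _ => (1 : ℝ≥0∞)) := by
      funext x
      by_cases hx : x ∈ C <;>
        simp [hf, BoundedContinuousFunction.nnrealPart_coeFn_eq, hx, Set.indicator_apply]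
    rw [h1] at h0
    rw [lintegral_indicator (hC.isOpen.measurableSet), setLIntegral_one] at h0
    calc ((μ.toFiniteMeasure.testAgainstNN f : ℝ≥0) : ℝ)
        = ((μ.toFiniteMeasure.testAgainstNN f : ℝ≥0) : ℝ≥0∞).toReal := (ENNReal.coe_toReal _).symm
      _ = mval μ C := by rw [h0, mval]
  have hc : Continuous fun μ : ProbabilityMeasure (ℕ → Bool) =>
      ((μ.toFiniteMeasure.testAgainstNN f : ℝ≥0) : ℝ) :=
    NNReal.continuous_coe.comp (ProbabilityMeasure.continuous_testAgainstNN_eval f)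
  exact hc.congr key

lemma isClopen_iter_inter (c : CylIdx) (n : ℕ) :
    IsClopen ((shiftMap^[n] ⁻¹' cylSet c) ∩ cylSet c) :=
  ((isClopen_cylSet c).preimage (shiftMap_continuous.iterate n)).inter (isClopen_cylSet c)

/-- The set of stationary ergodic probability measures on Cantor space is a
`Gδ` subset of the space of all Borel probability measures with the weak
topology. -/
theorem ergodic_measures_Gdelta :
    IsGδ {P : ProbabilityMeasure (ℕ → Bool) |
      ErgodicStationaryMeasure (P : Measure (ℕ → Bool))} := by
  have hset : {P : ProbabilityMeasure (ℕ → Bool) |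
      ErgodicStationaryMeasure (P : Measure (ℕ → Bool))} =
      ⋂ (p : CylIdx × ℕ),
        ({μ : ProbabilityMeasure (ℕ → Bool) |
            |mval μ (shiftMap ⁻¹' cylSet p.1) - mval μ (cylSet p.1)| < 1 / (p.2 + 1)} ∩
          ⋃ (N : ℕ) (_ : p.2 ≤ N),
            {μ : ProbabilityMeasure (ℕ → Bool) |
              |(N : ℝ)⁻¹ * ∑ n ∈ Finset.range N,
                  mval μ ((shiftMap^[n] ⁻¹' cylSet p.1) ∩ cylSet p.1)
                - mval μ (cylSet p.1) ^ 2| < 1 / (p.2 + 1)}) := by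
    ext μ
    simp only [mem_setOf_eq, mem_iInter, mem_inter_iff, mem_iUnion, exists_prop]
    constructor
    · rintro ⟨hstat, herg⟩ ⟨c, k⟩
      have hP : MeasurePreserving shiftMap (μ : Measure _) (μ : Measure _) :=
        stationary_iff_measurePreserving.mp hstat
      constructor
      · rw [mval, mval, hstat _ (measurableSet_cylSet c), sub_self, abs_zero]
        positivity
      · exact (ergodicStationary_iff_forall _ hP).mp herg c k
    · intro h
      have hstat : StationaryMeasure (μ : Measure _) := by
        apply stationary_of_cyl
        intro c
        have hlt : ∀ k : ℕ, |mval μ (shiftMap ⁻¹' cylSet c) - mval μ (cylSet c)| < 1 / (k + 1) :=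
          fun k => (h (c, k)).1
        have heq : mval μ (shiftMap ⁻¹' cylSet c) = mval μ (cylSet c) := by
          by_contra hne
          obtain ⟨k, hk⟩ := exists_nat_one_div_lt (abs_pos.mpr (sub_ne_zero.mpr hne))
          exact absurd (hlt k) (not_lt.mpr hk.le)
        exact (ENNReal.toReal_eq_toReal_iff' (measure_ne_top _ _) (measure_ne_top _ _)).mp heq
      refine ⟨hstat, ?_⟩
      have hP := stationary_iff_measurePreserving.mp hstat
      exact (ergodicStationary_iff_forall _ hP).mpr fun c k => (h (c, k)).2
  rw [hset]
  refine IsGδ.iInter fun p => ?_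
  refine IsOpen.isGδ (IsOpen.inter ?_ (isOpen_iUnion fun N => isOpen_iUnion fun _ => ?_))
  · have hcont : Continuous fun μ : ProbabilityMeasure (ℕ → Bool) =>
        |mval μ (shiftMap ⁻¹' cylSet p.1) - mval μ (cylSet p.1)| :=
      (((continuous_mval ((isClopen_cylSet p.1).preimage shiftMap_continuous)).sub
        (continuous_mval (isClopen_cylSet p.1)))).abs
    exact isOpen_lt hcont continuous_const
  · have hcont : Continuous fun μ : ProbabilityMeasure (ℕ → Bool) =>
        |(N : ℝ)⁻¹ * ∑ n ∈ Finset.range N,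
            mval μ ((shiftMap^[n] ⁻¹' cylSet p.1) ∩ cylSet p.1)
          - mval μ (cylSet p.1) ^ 2| := by
      refine Continuous.abs (Continuous.sub ?_ ?_)
      · exact (continuous_finset_sum (Finset.range N) fun n _ =>
          continuous_mval (isClopen_iter_inter p.1 n)).const_smul ((N : ℝ)⁻¹) |>.congr fun μ => by rw [Pi.smul_apply, smul_eq_mul]
      · exact (continuous_mval (isClopen_cylSet p.1)).pow 2
    exact isOpen_lt hcont continuous_const
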